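/- Let N be a stable 3-pair network and let i, j, l be pairwise distinct indices in {1,2,3} with j ∈ m_{i,j}^i and l ∈ m_{i,l}^i (i.e., ℓ^{i,j}(P_{s_j,t_i}) = 1 and ℓ^{i,l}(P_{s_l,t_i}) = 1). Then every s ∈ S_N with α(s) = 3 contains a diagonal element: if a single arc of N is traversed by three paths P_{s_{l_1},t_1}, P_{s_{l_2},t_2}, P_{s_{l_3},t_3}, then l_m = m for some m ∈ {1,2,3}. -/

import Mathlib

open scoped BigOperators

/-- A `k`-pair network: a finite DAG with `k` sources of in-degree 0 and
`k` sinks of out-degree 0. -/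
structure KPairNetwork (k : ℕ) where
  V : Type
  A : Type
  [fintypeV : Fintype V]
  [fintypeA : Fintype A]
  [decEqV : DecidableEq V]
  [decEqA : DecidableEq A]
  tail : A → V
  head : A → V
  /-- acyclicity, via a topological ordering of the vertices -/
  acyclic : ∃ ord : V → ℕ, ∀ a : A, ord (tail a) < ord (head a)
  src : Fin k → V
  snk : Fin k → V
  src_inj : Function.Injective src
  snk_inj : Function.Injective snk
  src_no_in : ∀ (i : Fin k) (a : A), head a ≠ src i
  snk_no_out : ∀ (i : Fin k) (a : A), tail a ≠ snk i

attribute [instance] KPairNetwork.fintypeV KPairNetwork.fintypeA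
attribute [instance] KPairNetwork.decEqV KPairNetwork.decEqA

namespace KPairNetwork

variable {k : ℕ} (N : KPairNetwork k)

/-- `l` is (the list of arcs of) a directed path from `u` to `v`. -/
def IsPathFrom (u v : N.V) (l : List N.A) : Prop :=
  l ≠ [] ∧ l.Chain' (fun a b => N.head a = N.tail b) ∧
    (∀ a ∈ l.head?, N.tail a = u) ∧ (∀ a ∈ l.getLast?, N.head a = v)

/-- The vertices lying on a (nonempty) list of arcs. -/
def pathVerts (l : List N.A) : Set N.V :=
  {v | ∃ a ∈ l, v = N.tail a ∨ v = N.head a}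

/-- `P i j` is a path from `s i` to `t j`, and for each sink `j` the `k`
paths `P · j` are pairwise arc-disjoint (strong reachability). -/
def IsStrongSystem (P : Fin k → Fin k → List N.A) : Prop :=
  (∀ i j, N.IsPathFrom (N.src i) (N.snk j) (P i j)) ∧
    ∀ (j i i' : Fin k), i ≠ i' → ∀ a : N.A, a ∈ P i j → a ∉ P i' j

/-- Extra strong reachability: in addition, for each sink `j`, two distinct
paths towards `t j` share no vertex other than `t j`. -/
def IsExtraStrongSystem (P : Fin k → Fin k → List N.A) : Prop :=
  N.IsStrongSystem P ∧
    ∀ (j i i' : Fin k), i ≠ i' →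
      ∀ v : N.V, v ∈ N.pathVerts (P i j) → v ∈ N.pathVerts (P i' j) → v = N.snk j

/-- Stability: the choice of the `k` pairwise arc-disjoint paths towards each
sink is unique. -/
def IsStableSystem (P : Fin k → Fin k → List N.A) : Prop :=
  N.IsStrongSystem P ∧
    ∀ (j : Fin k) (Q : Fin k → List N.A),
      (∀ i, N.IsPathFrom (N.src i) (N.snk j) (Q i)) →
      (∀ i i', i ≠ i' → ∀ a : N.A, a ∈ Q i → a ∉ Q i') →
      ∀ i, Q i = P i j

/-- `excess_f(v) = Σ_{head a = v} f a − Σ_{tail a = v} f a`. -/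
noncomputable def excess (f : N.A → ℝ) (v : N.V) : ℝ :=
  (∑ a : N.A, if N.head a = v then f a else 0) -
    (∑ a : N.A, if N.tail a = v then f a else 0)

/-- An `u`–`v` flow: zero excess away from `u` and `v`. -/
def IsFlow (u v : N.V) (f : N.A → ℝ) : Prop :=
  ∀ w : N.V, w ≠ u → w ≠ v → N.excess f w = 0

/-- The unit flow along a path: `1` on its arcs and `0` elsewhere. -/
noncomputable def unitFlow (l : List N.A) : N.A → ℝ :=
  fun a => if a ∈ l then 1 else 0

/-- The set of source/sink index pairs whose path passes through the arc `a`. -/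
def arcPattern (P : Fin k → Fin k → List N.A) (a : N.A) : Finset (Fin k × Fin k) :=
  Finset.univ.filter (fun q => a ∈ P q.1 q.2)

/-- `S_N`, the family of index-pair patterns of the arcs of `N`. -/
def SN (P : Fin k → Fin k → List N.A) : Set (Finset (Fin k × Fin k)) :=
  {T | ∃ a : N.A, T = N.arcPattern P a}

/-! ### Segments and longest common segments -/

/-- A segment: a start vertex together with a (possibly empty) chained list of
arcs starting there.  A segment with no arcs is a single vertex. -/
def IsSeg (s : N.V × List N.A) : Prop :=
  s.2.Chain' (fun a b => N.head a = N.tail b) ∧ ∀ a ∈ s.2.head?, N.tail a = s.1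

/-- The vertices of a segment. -/
def segVerts (s : N.V × List N.A) : Set N.V :=
  insert s.1 (N.pathVerts s.2)

/-- The final vertex of a segment. -/
def segEnd (s : N.V × List N.A) : N.V :=
  s.2.getLast?.elim s.1 N.head

/-- The segment `s` lies on the path `p`. -/
def SegOn (s : N.V × List N.A) (p : List N.A) : Prop :=
  s.2 <:+: p ∧ s.1 ∈ N.pathVerts p

/-- The segment `s` is contained in the segment `s'`. -/
def SegLE (s s' : N.V × List N.A) : Prop :=
  s.2 <:+: s'.2 ∧ s.1 ∈ N.segVerts s'

/-- `s` is a longest common segment (l.c.s.) of the set of paths `ps`: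
it is a segment common to all paths of `ps`, and no segment properly
containing it is common to all paths of `ps`. -/
def IsLCS (ps : Set (List N.A)) (s : N.V × List N.A) : Prop :=
  N.IsSeg s ∧ (∀ p ∈ ps, N.SegOn s p) ∧
    ∀ s' : N.V × List N.A, N.IsSeg s' → N.SegLE s s' → s' ≠ s →
      ∃ p ∈ ps, ¬ N.SegOn s' p

/-- `s` is an l.c.s. of some pair `{P i j₁, P i' j₂}` and lies on `p`. -/
def IsPairLCSOn (P : Fin k → Fin k → List N.A) (j₁ j₂ : Fin k)
    (p : List N.A) (s : N.V × List N.A) : Prop :=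
  (∃ i i' : Fin k, N.IsLCS {P i j₁, P i' j₂} s) ∧ N.SegOn s p

/-- `ℓ^{j₁,j₂}(p)`: the number of l.c.s.'s of pairs `{P i j₁, P i' j₂}` lying
on the path `p`. -/
noncomputable def lcsCount (P : Fin k → Fin k → List N.A) (j₁ j₂ : Fin k)
    (p : List N.A) : ℕ :=
  Nat.card {s : N.V × List N.A | N.IsPairLCSOn P j₁ j₂ p s}

/-- `m_{j₁,j₂}^c = {i : ℓ^{j₁,j₂}(P_{s_i,t_c}) = 1}`. -/
def mset (P : Fin k → Fin k → List N.A) (j₁ j₂ c : Fin k) : Set (Fin k) :=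
  {i | N.lcsCount P j₁ j₂ (P i c) = 1}

/-- `u` lies strictly before `v` along the path `p` (there is a nonempty
infix of `p` going from `u` to `v`). -/
def StrictlyBeforeOn (p : List N.A) (u v : N.V) : Prop :=
  ∃ l : List N.A, l <:+: p ∧ l.head?.map N.tail = some u ∧ l.getLast?.map N.head = some v

/-- `e 0, …, e (L-1)` enumerates, in the order along `p`, the l.c.s.'s
`p(1) < p(2) < ⋯ < p(L)` of pairs `{P i j₁, P i' j₂}` lying on `p`. -/
def IsLCSEnum (P : Fin k → Fin k → List N.A) (j₁ j₂ : Fin k) (p : List N.A)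
    (e : ℕ → N.V × List N.A) (L : ℕ) : Prop :=
  (∀ n, n < L → N.IsPairLCSOn P j₁ j₂ p (e n)) ∧
  (∀ s, N.IsPairLCSOn P j₁ j₂ p s → ∃ n, n < L ∧ e n = s) ∧
  (∀ m n, m < n → n < L → N.StrictlyBeforeOn p (N.segEnd (e m)) (e n).1)

/-! ### Residual networks, regular cycles, semi-cycles and crossings -/

/-- `a` is a `P_{t_j}`-arc. -/
def isPArc (P : Fin k → Fin k → List N.A) (j : Fin k) (a : N.A) : Prop :=
  ∃ i, a ∈ P i j

/-- The tail of `a` in the `j`-th residual network `N_j` (in which all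
`P_{t_j}`-arcs are reversed). -/
def rtail (P : Fin k → Fin k → List N.A) (j : Fin k) (a : N.A) : N.V :=
  if ∃ i, a ∈ P i j then N.head a else N.tail a

/-- The head of `a` in the `j`-th residual network `N_j`. -/
def rhead (P : Fin k → Fin k → List N.A) (j : Fin k) (a : N.A) : N.V :=
  if ∃ i, a ∈ P i j then N.tail a else N.head a

/-- `l` is a directed cycle of the residual network `N_j`. -/
def IsResidCycle (P : Fin k → Fin k → List N.A) (j : Fin k) (l : List N.A) : Prop :=
  l ≠ [] ∧ l.Nodup ∧
  l.Chain' (fun a b => N.rhead P j a = N.rtail P j b) ∧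
  (∀ a ∈ l.getLast?, ∀ b ∈ l.head?, N.rhead P j a = N.rtail P j b) ∧
  (l.map (N.rtail P j)).Nodup

/-- A regular cycle of `N_j`: a directed cycle of `N_j` having no isolated
vertex of `P_{t_j}`, i.e. every vertex of the cycle lying on a path of
`P_{t_j}` is incident in the cycle to some (reversed) `P_{t_j}`-arc. -/
def IsRegularCycle (P : Fin k → Fin k → List N.A) (j : Fin k) (l : List N.A) : Prop :=
  N.IsResidCycle P j l ∧
    ∀ v ∈ l.map (N.rtail P j),
      (∃ i, v ∈ N.pathVerts (P i j)) →
      ∃ a ∈ l, N.isPArc P j a ∧ (v = N.tail a ∨ v = N.head a)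

/-- A `P_{t_j}`-semi-cycle of `N`: the arc set of a regular cycle of `N_j`,
with the original orientations of `N` restored. -/
def IsSemiCycle (P : Fin k → Fin k → List N.A) (j : Fin k) (E : Set N.A) : Prop :=
  ∃ l : List N.A, N.IsRegularCycle P j l ∧ E = {a | a ∈ l}

/-- A `P_{t_j}`-crossing of `N`: a `P_{t_j}`-semi-cycle with all its
`P_{t_j}`-arcs removed. -/
def IsCrossing (P : Fin k → Fin k → List N.A) (j : Fin k) (E : Set N.A) : Prop :=
  ∃ l : List N.A, N.IsRegularCycle P j l ∧ E = {a | a ∈ l ∧ ¬ N.isPArc P j a}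

end KPairNetwork

namespace KPairNetwork

variable {k : ℕ} (N : KPairNetwork k)

lemma pathVerts_mono' {l l' : List N.A} (h : l <:+: l') :
    N.pathVerts l ⊆ N.pathVerts l' := by
  rintro v ⟨a, ha, hv⟩
  exact ⟨a, h.subset ha, hv⟩

lemma segLE_refl (s : N.V × List N.A) : N.SegLE s s :=
  ⟨List.infix_refl _, Set.mem_insert _ _⟩

lemma segLE_trans {s s' s'' : N.V × List N.A}
    (h : N.SegLE s s') (h' : N.SegLE s' s'') : N.SegLE s s'' := by
  refine ⟨h.1.trans h'.1, ?_⟩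
  rcases h.2 with h2 | h2
  · rw [h2]; exact h'.2
  · exact Set.mem_insert_iff.mpr (Or.inr (N.pathVerts_mono' h'.1 h2))

lemma seg_eq_of_le {s s' : N.V × List N.A} (hs : N.IsSeg s) (hs' : N.IsSeg s')
    (h : N.SegLE s s') (hlen : s'.2.length ≤ s.2.length) : s' = s := by
  have h2 : s.2 = s'.2 := h.1.sublist.eq_of_length_le hlen
  have h1 : s'.1 = s.1 := by
    rcases hle : s.2 with _ | ⟨a, t⟩
    · rw [hle] at h2
      rcases h.2 with h2' | h2'
      · exact h2'.symm
      · rw [← h2] at h2'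
        exact absurd h2' (by rintro ⟨b, hb, _⟩; simp at hb)
    · have e1 : N.tail a = s.1 := hs.2 a (by rw [hle]; rfl)
      have e2 : N.tail a = s'.1 := hs'.2 a (by rw [← h2, hle]; rfl)
      rw [← e1, ← e2]
  exact Prod.ext h1 h2.symm

lemma exists_lcs_aux (p q : List N.A) (n : ℕ) :
    ∀ s : N.V × List N.A, p.length ≤ s.2.length + n → N.IsSeg s →
      N.SegOn s p → N.SegOn s q →
      ∃ t, N.IsLCS {p, q} t ∧ N.SegLE s t := by
  induction n with
  | zero =>
    intro s hlen hs hp hq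
    refine ⟨s, ⟨hs, ?_, ?_⟩, N.segLE_refl s⟩
    · rintro r (rfl | rfl)
      · exact hp
      · exact hq
    · intro s' hs' hle hne
      refine ⟨p, Set.mem_insert _ _, fun hon => hne ?_⟩
      exact N.seg_eq_of_le hs hs' hle (le_trans hon.1.length_le (by omega))
  | succ n ih =>
    intro s hlen hs hp hq
    by_cases hmax : ∀ s' : N.V × List N.A, N.IsSeg s' → N.SegLE s s' → s' ≠ s →
        ∃ r ∈ ({p, q} : Set (List N.A)), ¬ N.SegOn s' r
    · refine ⟨s, ⟨hs, ?_, hmax⟩, N.segLE_refl s⟩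
      rintro r (rfl | rfl)
      · exact hp
      · exact hq
    · push_neg at hmax
      obtain ⟨s', hs', hle, hne, hall⟩ := hmax
      have hgt : s.2.length < s'.2.length := by
        by_contra hc
        exact hne (N.seg_eq_of_le hs hs' hle (by omega))
      obtain ⟨t, ht, hle'⟩ := ih s' (by omega) hs'
        (hall p (Set.mem_insert _ _)) (hall q (Set.mem_insert_iff.mpr (Or.inr rfl)))
      exact ⟨t, ht, N.segLE_trans hle hle'⟩

lemma exists_lcs (p q : List N.A) (s : N.V × List N.A) (hs : N.IsSeg s)
    (hp : N.SegOn s p) (hq : N.SegOn s q) :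
    ∃ t, N.IsLCS {p, q} t ∧ N.SegLE s t :=
  N.exists_lcs_aux p q p.length s (by omega) hs hp hq

lemma tail_aux : ∀ (l : List N.A) (u : N.V),
    l.Chain' (fun a b => N.head a = N.tail b) →
    (∀ a ∈ l.head?, N.tail a = u) →
    ∀ a ∈ l, N.tail a = u ∨ ∃ a' ∈ l, N.head a' = N.tail a := by
  intro l
  induction l with
  | nil => intro u _ _ a ha; simp at ha
  | cons x xs ihl =>
    intro u hch hhd a ha
    rcases List.mem_cons.mp ha with rfl | ha'
    · exact Or.inl (hhd a rfl)
    · rcases xs with _ | ⟨y, ys⟩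
      · simp at ha'
      · have hc := List.isChain_cons_cons.mp hch
        have := ihl (N.head x) hc.2
          (fun b hb => by
            simp only [List.head?] at hb
            cases hb
            exact hc.1.symm) a ha'
        rcases this with h | ⟨a', ha'', h⟩
        · exact Or.inr ⟨x, List.mem_cons_self, h.symm ▸ rfl⟩
        · exact Or.inr ⟨a', List.mem_cons_of_mem _ ha'', h⟩

lemma src_mem_pathVerts {u v : N.V} {l : List N.A} (hp : N.IsPathFrom u v l) :
    u ∈ N.pathVerts l := by
  obtain ⟨hne, _, hhd, _⟩ := hp
  rcases l with _ | ⟨a, t⟩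
  · exact absurd rfl hne
  · exact ⟨a, List.mem_cons_self, Or.inl (hhd a rfl).symm⟩

lemma src_not_mem {b x : Fin k} (hxb : x ≠ b) {v : N.V} {l : List N.A}
    (hp : N.IsPathFrom (N.src b) v l) : N.src x ∉ N.pathVerts l := by
  rintro ⟨a, ha, h | h⟩
  · rcases N.tail_aux l (N.src b) hp.2.1 hp.2.2.1 a ha with h' | ⟨a', _, h'⟩
    · exact hxb (N.src_inj (h.symm ▸ h' ▸ rfl : N.src x = N.src b))
    · exact N.src_no_in x a' (h'.trans h.symm)
  · exact N.src_no_in x a h.symm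

lemma key (P : Fin k → Fin k → List N.A)
    (hpaths : ∀ i j, N.IsPathFrom (N.src i) (N.snk j) (P i j))
    (i j : Fin k) (hcnt : N.lcsCount P i j (P j i) = 1)
    (b : Fin k) (hb : b ≠ j) :
    ∀ v, v ∈ N.pathVerts (P j i) → v ∉ N.pathVerts (P b j) := by
  intro v h1 h2
  have hseg : ∀ w : N.V, N.IsSeg ((w, []) : N.V × List N.A) :=
    fun w => ⟨List.isChain_nil, by simp⟩
  -- t₁ : an lcs of {P j i, P b j}
  obtain ⟨t₁, ht₁, -⟩ := N.exists_lcs (P j i) (P b j) (v, []) (hseg v)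
    ⟨(P j i).nil_infix, h1⟩ ⟨(P b j).nil_infix, h2⟩
  -- t₀ : an lcs of {P j i, P j j} containing src j
  have hsj1 : N.src j ∈ N.pathVerts (P j i) := N.src_mem_pathVerts (hpaths j i)
  have hsj2 : N.src j ∈ N.pathVerts (P j j) := N.src_mem_pathVerts (hpaths j j)
  obtain ⟨t₀, ht₀, hle₀⟩ := N.exists_lcs (P j i) (P j j) (N.src j, []) (hseg (N.src j))
    ⟨(P j i).nil_infix, hsj1⟩ ⟨(P j j).nil_infix, hsj2⟩
  have hm₀ : N.IsPairLCSOn P i j (P j i) t₀ :=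
    ⟨⟨j, j, ht₀⟩, ht₀.2.1 (P j i) (Set.mem_insert _ _)⟩
  have hm₁ : N.IsPairLCSOn P i j (P j i) t₁ :=
    ⟨⟨j, b, ht₁⟩, ht₁.2.1 (P j i) (Set.mem_insert _ _)⟩
  have hsj_t₀ : N.src j ∈ N.segVerts t₀ := hle₀.2
  have hsj_not_t₁ : N.src j ∉ N.segVerts t₁ := by
    have hOn : N.SegOn t₁ (P b j) :=
      ht₁.2.1 (P b j) (Set.mem_insert_iff.mpr (Or.inr rfl))
    have hnm : N.src j ∉ N.pathVerts (P b j) :=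
      N.src_not_mem (Ne.symm hb) (hpaths b j)
    rintro (h | h)
    · exact hnm (h ▸ hOn.2)
    · exact hnm (N.pathVerts_mono' hOn.1 h)
  have hne : t₀ ≠ t₁ := fun he => hsj_not_t₁ (he ▸ hsj_t₀)
  rw [KPairNetwork.lcsCount] at hcnt
  obtain ⟨x, hx⟩ := Nat.card_eq_one_iff_exists.mp hcnt
  have heq := (hx ⟨t₀, hm₀⟩).trans (hx ⟨t₁, hm₁⟩).symm
  exact hne (congrArg Subtype.val heq)

end KPairNetwork


/-- Case 1.2 of the proof of the main theorem: in a stable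
3-pair network, if `j ∈ m_{i,j}^i` and `l ∈ m_{i,l}^i` for pairwise distinct
`i, j, l`, then every `s ∈ S_N` with `α(s) = 3` contains a diagonal element;
equivalently, if one arc carries three paths `P_{s_{l₁},t_1}`,
`P_{s_{l₂},t_2}`, `P_{s_{l₃},t_3}` then `l_m = m` for some `m`. -/
theorem statement14 (N : KPairNetwork 3) (P : Fin 3 → Fin 3 → List N.A)
    (hP : N.IsStableSystem P)
    (i j l : Fin 3) (hij : i ≠ j) (hil : i ≠ l) (hjl : j ≠ l)
    (h₁ : j ∈ N.mset P i j i) (h₂ : l ∈ N.mset P i l i) :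
    (∀ T ∈ N.SN P, T.card = 3 → ∃ m : Fin 3, (m, m) ∈ T) ∧
    ∀ (a : N.A) (l₁ l₂ l₃ : Fin 3),
      a ∈ P l₁ 0 → a ∈ P l₂ 1 → a ∈ P l₃ 2 →
      l₁ = 0 ∨ l₂ = 1 ∨ l₃ = 2 := by
  obtain ⟨⟨hpaths, hdisj⟩, -⟩ := hP
  have h₁' : N.lcsCount P i j (P j i) = 1 := h₁
  have h₂' : N.lcsCount P i l (P l i) = 1 := h₂
  have core : ∀ (a : N.A) (l₁ l₂ l₃ : Fin 3),
      a ∈ P l₁ 0 → a ∈ P l₂ 1 → a ∈ P l₃ 2 →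
      l₁ = 0 ∨ l₂ = 1 ∨ l₃ = 2 := by
    intro a x0 x1 x2 hm0 hm1 hm2
    by_contra hc
    push_neg at hc
    obtain ⟨n0, n1, n2⟩ := hc
    set X : Fin 3 → Fin 3 := ![x0, x1, x2] with hXdef
    have hX : ∀ d, a ∈ P (X d) d := by
      intro d
      fin_cases d <;> simpa [hXdef] using (by assumption : a ∈ P _ _)
    have hXne : ∀ d, X d ≠ d := by
      intro d
      fin_cases d <;> simpa [hXdef]
    have htri : ∀ i j l x : Fin 3, i ≠ j → i ≠ l → j ≠ l → x ≠ i →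
        x = j ∨ x = l := by decide
    rcases htri i j l (X i) hij hil hjl (hXne i) with hXi | hXi
    · exact N.key P hpaths i j h₁' (X j) (hXne j) (N.tail a)
        ⟨a, hXi ▸ hX i, Or.inl rfl⟩ ⟨a, hX j, Or.inl rfl⟩
    · exact N.key P hpaths i l h₂' (X l) (hXne l) (N.tail a)
        ⟨a, hXi ▸ hX i, Or.inl rfl⟩ ⟨a, hX l, Or.inl rfl⟩
  refine ⟨?_, core⟩
  intro T hT hcard
  obtain ⟨a, rfl⟩ := hT
  have hmemT : ∀ q : Fin 3 × Fin 3, q ∈ N.arcPattern P a ↔ a ∈ P q.1 q.2 := by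
    intro q
    simp [KPairNetwork.arcPattern]
  have hinj : Set.InjOn Prod.snd (N.arcPattern P a : Set (Fin 3 × Fin 3)) := by
    rintro ⟨x, d⟩ hx ⟨x', d'⟩ hx' (h : d = d')
    subst h
    rcases eq_or_ne x x' with rfl | hxx
    · rfl
    · exact absurd ((hmemT _).mp hx') (hdisj d x x' hxx a ((hmemT _).mp hx))
  have himg : (N.arcPattern P a).image Prod.snd = Finset.univ := by
    apply Finset.eq_univ_of_card
    rw [Finset.card_image_of_injOn hinj, hcard]
    simp
  have hfib : ∀ d : Fin 3, ∃ x : Fin 3, a ∈ P x d := by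
    intro d
    have : d ∈ (N.arcPattern P a).image Prod.snd := himg ▸ Finset.mem_univ d
    obtain ⟨q, hq, hq2⟩ := Finset.mem_image.mp this
    exact ⟨q.1, by rw [← hq2] at *; exact (hmemT q).mp hq⟩
  obtain ⟨x0, hx0⟩ := hfib 0
  obtain ⟨x1, hx1⟩ := hfib 1
  obtain ⟨x2, hx2⟩ := hfib 2
  rcases core a x0 x1 x2 hx0 hx1 hx2 with h | h | h
  · exact ⟨0, (hmemT (0, 0)).mpr (h ▸ hx0)⟩
  · exact ⟨1, (hmemT (1, 1)).mpr (h ▸ hx1)⟩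
  · exact ⟨2, (hmemT (2, 2)).mpr (h ▸ hx2)⟩
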